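/- In the deformed one-boson realization N = ((e^{2λα²}−1)/(2λα)) d/dα, A₊ = ((1−e^{−2λα²})/(2λ))^{1/2}, A₋ = (e^{2λα²}/α)((1−e^{−2λα²})/(2λ))^{1/2} d/dα, M = 1, the undeformed oscillator relations hold: [N,A₊] = A₊, [N,A₋] = −A₋, and [A₋,A₊] = M. -/

import Mathlib

open PowerSeries

noncomputable section

/-- Formal differentiation `d/dα` as a linear operator on `ℂ⟦α⟧`. -/
def Dop : Module.End ℂ (PowerSeries ℂ) := (PowerSeries.derivative ℂ).toLinearMap

/-- Multiplication by a fixed formal power series, as a linear operator. -/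
def mulOp (s : PowerSeries ℂ) : Module.End ℂ (PowerSeries ℂ) := LinearMap.mulLeft ℂ s

/-- The formal power series `e^{cα²} = ∑ₖ cᵏ α^{2k}/k!`. -/
def expSq (c : ℂ) : PowerSeries ℂ :=
  PowerSeries.mk fun n => if 2 ∣ n then c ^ (n / 2) / (Nat.factorial (n / 2)) else 0

/-- Formal division by `α` (valid when applied to series with zero constant
term). -/
def divX (f : PowerSeries ℂ) : PowerSeries ℂ :=
  PowerSeries.mk fun n => PowerSeries.coeff (n + 1) f

lemma X_mul_divX (f : PowerSeries ℂ) (h : coeff 0 f = 0) : X * divX f = f := by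
  ext n
  cases n with
  | zero => simpa using h.symm
  | succ n => simp [coeff_succ_X_mul, divX]

lemma coeff_zero_expSq (c : ℂ) : coeff 0 (expSq c) = 1 := by simp [expSq]

lemma derivative_expSq (c : ℂ) :
    PowerSeries.derivative ℂ (expSq c) = C (2 * c) * (X * expSq c) := by
  ext n
  rw [coeff_derivative, coeff_C_mul]
  cases n with
  | zero => simp [expSq, Nat.odd_iff.mp ⟨0, rfl⟩]
  | succ n =>
    rw [coeff_succ_X_mul]
    rcases Nat.even_or_odd n with ⟨k, hk⟩ | ⟨k, hk⟩
    · subst hk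
      have h1 : (2:ℕ) ∣ k + k := ⟨k, by ring⟩
      have h2 : (2:ℕ) ∣ k + k + 1 + 1 := ⟨k+1, by ring⟩
      have e1 : (k + k) / 2 = k := by omega
      have e2 : (k + k + 1 + 1) / 2 = k + 1 := by omega
      simp only [expSq, coeff_mk, if_pos h1, if_pos h2, e1, e2]
      rw [Nat.factorial_succ]
      have hfk : ((k.factorial : ℂ)) ≠ 0 := Nat.cast_ne_zero.mpr k.factorial_ne_zero
      have hk1 : ((k:ℂ) + 1) ≠ 0 := by
        have := Nat.cast_add_one_ne_zero (R := ℂ) k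
        simpa using this
      field_simp
      push_cast
      ring
    · subst hk
      have h1 : ¬ (2:ℕ) ∣ 2*k + 1 := by omega
      have h2 : ¬ (2:ℕ) ∣ 2*k + 1 + 1 + 1 := by omega
      simp [expSq, h1, h2]

lemma eq_one_of_derivative_eq_zero (f : PowerSeries ℂ)
    (h : PowerSeries.derivative ℂ f = 0) (h0 : coeff 0 f = 1) : f = 1 := by
  ext n
  cases n with
  | zero => simpa using h0
  | succ n =>
    have hc := congrArg (coeff n) h
    rw [coeff_derivative] at hc
    simp only [map_zero] at hc
    have hne : ((n:ℂ) + 1) ≠ 0 := by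
      have := Nat.cast_add_one_ne_zero (R := ℂ) n
      simpa using this
    have : coeff (n+1) f = 0 := by
      rcases mul_eq_zero.mp hc with h' | h'
      · exact h'
      · exact absurd (by exact_mod_cast h') hne
    simp [this, coeff_one]

lemma expSq_mul_expSq_neg (c : ℂ) : expSq c * expSq (-c) = 1 := by
  apply eq_one_of_derivative_eq_zero
  · rw [Derivation.leibniz, smul_eq_mul, smul_eq_mul, derivative_expSq, derivative_expSq]
    ring_nf
    rw [map_neg]
    ring
  · rw [coeff_zero_eq_constantCoeff_apply, map_mul]
    rw [← coeff_zero_eq_constantCoeff_apply, ← coeff_zero_eq_constantCoeff_apply,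
      coeff_zero_expSq, coeff_zero_expSq, one_mul]

lemma comm_mulD_mul (f g : PowerSeries ℂ) :
    ⁅mulOp f * Dop, mulOp g⁆ = mulOp (f * PowerSeries.derivative ℂ g) := by
  rw [Ring.lie_def]
  ext h
  simp only [LinearMap.sub_apply, Module.End.mul_apply, mulOp, Dop, LinearMap.mulLeft_apply,
    Derivation.coeFn_coe]
  rw [Derivation.leibniz, smul_eq_mul, smul_eq_mul]
  ring

lemma comm_mulD_mulD (f g : PowerSeries ℂ) :
    ⁅mulOp f * Dop, mulOp g * Dop⁆ =
      mulOp (f * PowerSeries.derivative ℂ g - g * PowerSeries.derivative ℂ f) * Dop := by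
  rw [Ring.lie_def]
  ext h
  simp only [LinearMap.sub_apply, Module.End.mul_apply, mulOp, Dop, LinearMap.mulLeft_apply,
    Derivation.coeFn_coe]
  rw [Derivation.leibniz, Derivation.leibniz, smul_eq_mul, smul_eq_mul, smul_eq_mul, smul_eq_mul]
  ring

lemma mulOp_neg (f : PowerSeries ℂ) : mulOp (-f) = -mulOp f := by
  ext h
  simp [mulOp]

lemma mulOp_one : mulOp 1 = (1 : Module.End ℂ (PowerSeries ℂ)) := by
  ext h
  simp [mulOp]

/-- In the type III deformed one-boson realization, with
`s = ((1−e^{−2λα²})/(2λ))^{1/2}` (the branch whose lowest term is `α`), the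
operators `N = ((e^{2λα²}−1)/(2λα)) d/dα`, `A₊ = s·`,
`A₋ = (e^{2λα²} s/α) d/dα`, `M = 1` satisfy the undeformed oscillator
relations `[N,A₊] = A₊`, `[N,A₋] = −A₋`, `[A₋,A₊] = M`. -/
theorem deformed_realization_undeformed_oscillator_relations
    (lam : ℂ) (hlam : lam ≠ 0) (s : PowerSeries ℂ)
    (hs : s ^ 2 = (2 * lam)⁻¹ • (1 - expSq (-(2 * lam))))
    (hs1 : PowerSeries.coeff 1 s = 1) :
    let e2 : PowerSeries ℂ := expSq (2 * lam)  -- e^{2λα²}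
    let N := mulOp ((2 * lam)⁻¹ • divX (e2 - 1)) * Dop
    let Ap := mulOp s
    let Am := mulOp (divX (e2 * s)) * Dop
    let M : Module.End ℂ (PowerSeries ℂ) := 1
    ⁅N, Ap⁆ = Ap ∧ ⁅N, Am⁆ = -Am ∧ ⁅Am, Ap⁆ = M := by
  intro e2 N Ap Am M
  have hlam2 : (2 * lam) ≠ 0 := mul_ne_zero two_ne_zero hlam
  set Dv := PowerSeries.derivative ℂ with hDv
  set em := expSq (-(2*lam)) with hem
  set n0 := divX (e2 - 1) with hn0
  set m := divX (e2 * s) with hm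
  set t : PowerSeries ℂ := C (2*lam) with ht
  set ti : PowerSeries ℂ := C (2*lam)⁻¹ with hti
  have hI : ti * t = 1 := by
    rw [hti, ht, ← map_mul, inv_mul_cancel₀ hlam2, map_one]
  have hG : e2 * em = 1 := expSq_mul_expSq_neg (2*lam)
  have hs' : s^2 = ti * (1 - em) := by rw [hs, smul_eq_C_mul]
  have hs0 : coeff 0 s = 0 := by
    have h0 := congrArg (constantCoeff) hs'
    rw [map_pow, map_mul, map_sub, map_one] at h0
    have hc : constantCoeff em = 1 := by
      rw [← coeff_zero_eq_constantCoeff_apply]; exact coeff_zero_expSq _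
    rw [hc, sub_self, mul_zero] at h0
    rw [coeff_zero_eq_constantCoeff_apply]
    exact pow_eq_zero_iff (n := 2) (by norm_num) |>.mp h0
  have hA : X * n0 = e2 - 1 := by
    apply X_mul_divX
    have hc : coeff 0 e2 = 1 := coeff_zero_expSq (2*lam)
    rw [map_sub, hc, coeff_zero_one, sub_self]
  have hB : X * m = e2 * s := by
    apply X_mul_divX
    rw [coeff_zero_eq_constantCoeff_apply, map_mul, ← coeff_zero_eq_constantCoeff_apply,
      ← coeff_zero_eq_constantCoeff_apply, coeff_zero_expSq, hs0, mul_zero]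
  have hc2 : C (2*(2*lam)) = 2 * t := by
    rw [map_mul, ht, map_ofNat]
  have hcm : C (2*(-(2*lam))) = -(2 * t) := by
    rw [show (2*(-(2*lam))) = -(2*(2*lam)) by ring, map_neg, hc2]
  have hDe2 : Dv e2 = 2 * t * (X * e2) := by
    rw [hDv, derivative_expSq, hc2]
  have hDem : Dv em = -(2 * t) * (X * em) := by
    rw [hDv, hem, derivative_expSq, hcm]
  -- s * s' = X * em
  have hF : s * Dv s = X * em := by
    have h1 := congrArg (⇑Dv) hs'
    have hL : Dv (s^2) = 2*(s*Dv s) := by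
      rw [pow_two, Derivation.leibniz]; simp only [smul_eq_mul]; ring
    have hR : Dv (ti*(1-em)) = ti * (-(Dv em)) := by
      rw [Derivation.leibniz]
      simp only [smul_eq_mul]
      rw [hti, hDv, derivative_C, Derivation.map_sub, Derivation.map_one_eq_zero]
      ring
    rw [hL, hR, hDem] at h1
    have h2 : (2:PowerSeries ℂ)*(s*Dv s) = 2*(X*em) := by
      linear_combination h1 + (2*(X*em))*hI
    have h2ne : (2 : PowerSeries ℂ) ≠ 0 := fun h => by
      have := congrArg (constantCoeff) h
      rw [map_ofNat, map_zero] at this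
      norm_num at this
    exact mul_left_cancel₀ h2ne h2
  have hC : X * Dv n0 = 2*t*(X*e2) - n0 := by
    have h1 := congrArg (⇑Dv) hA
    rw [Derivation.leibniz] at h1
    simp only [smul_eq_mul] at h1
    rw [hDv, derivative_X, Derivation.map_sub, Derivation.map_one_eq_zero, ← hDv, hDe2] at h1
    linear_combination h1
  have hD : X * Dv m = 2*t*(X*e2)*s + e2*Dv s - m := by
    have h1 := congrArg (⇑Dv) hB
    rw [Derivation.leibniz, Derivation.leibniz (a := e2) (b := s)] at h1
    simp only [smul_eq_mul] at h1
    rw [hDv, derivative_X, ← hDv, hDe2] at h1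
    linear_combination h1
  have hsne : s ≠ 0 := by
    intro h
    rw [h] at hs1
    simp at hs1
  have hXne : (X : PowerSeries ℂ) ≠ 0 := X_ne_zero
  -- key identity 1 : n * s' = s
  have hE : ti * n0 * Dv s = s := by
    apply mul_left_cancel₀ (mul_ne_zero hXne hsne)
    linear_combination (ti*Dv s*s) * hA + (ti*(e2-1))*hF + (ti*X)*hG - X*hs'
  -- key identity 3 : m * s' = 1
  have hkey3 : m * Dv s = 1 := by
    apply mul_left_cancel₀ hXne
    linear_combination (Dv s)*hB + e2*hF + X*hG
  -- key identity 2
  have hkey2 : (ti * n0) * Dv m - m * ((ti) * Dv n0) = -m := by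
    apply mul_left_cancel₀ (pow_ne_zero 3 hXne)
    linear_combination (ti*X^2*Dv m + ti*e2*s - ti*X*e2*Dv s) * hA
      + (ti*(1-e2) + X^2 - ti*X^2*Dv n0) * hB - (ti*X*e2*s) * hC
      + (ti*X*(e2-1)) * hD + (X^2*e2) * hE - (2*X^2*e2*s) * hI
  have hDtin : Dv (ti * n0) = ti * Dv n0 := by
    rw [Derivation.leibniz]
    simp only [smul_eq_mul]
    rw [hti, hDv, derivative_C]
    ring
  refine ⟨?_, ?_, ?_⟩
  · show ⁅mulOp ((2 * lam)⁻¹ • n0) * Dop, mulOp s⁆ = mulOp s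
    rw [comm_mulD_mul]
    congr 1
    rw [smul_eq_C_mul, ← hti, ← hDv]
    exact hE
  · show ⁅mulOp ((2 * lam)⁻¹ • n0) * Dop, mulOp m * Dop⁆ = -(mulOp m * Dop)
    rw [comm_mulD_mulD]
    rw [smul_eq_C_mul, ← hti, ← hDv, hDtin, hkey2, mulOp_neg]
    ext h
    simp [Module.End.mul_apply]
  · show ⁅mulOp m * Dop, mulOp s⁆ = M
    rw [comm_mulD_mul, ← hDv, hkey3, mulOp_one]

end
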